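/- Let k be a field of characteristic different from 2 and 3, let a, c, d ∈ k, and let β ∈ k with β² = d and β ≠ 0. Consider the Weierstrass curve E : y² = x³ + a x² + c x + d over k (assume its discriminant is nonzero, so E is an elliptic curve), and let P = (0, β) be the corresponding affine point of E. Then 3 • P = O (i.e., P is a point of order 3) if and only if c² = 4ad. -/

import Mathlib

open WeierstrassCurve.Affine WeierstrassCurve.Affine.Point

private lemma some_eq_some_aux {k : Type*} [Field k] {W : WeierstrassCurve.Affine k}
    {x₁ y₁ x₂ y₂ : k} (h₁ : W.Nonsingular x₁ y₁) (h₂ : W.Nonsingular x₂ y₂)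
    (hx : x₁ = x₂) (hy : y₁ = y₂) : Point.some _ _ h₁ = Point.some _ _ h₂ := by
  subst hx; subst hy; rfl

open Classical in
/-- Order-3 criterion: on `E : y² = x³ + a x² + c x + d` over a field `k` of characteristic
different from 2 and 3, with nonzero discriminant, the point `P = (0, β)` (where `β² = d`,
`β ≠ 0`) satisfies `3 • P = O` if and only if `c² = 4ad`. -/
theorem order_three_criterion {k : Type*} [Field k]
    (h2 : (2 : k) ≠ 0) (h3 : (3 : k) ≠ 0)
    (a c d β : k) (hβ : β ^ 2 = d) (hβ0 : β ≠ 0)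
    (W : WeierstrassCurve.Affine k)
    (hW : W = { a₁ := 0, a₂ := a, a₃ := 0, a₄ := c, a₆ := d })
    (hΔ : W.Δ ≠ 0) (hns : W.Nonsingular 0 β) :
    3 • (WeierstrassCurve.Affine.Point.some _ _ hns) = (0 : W.Point) ↔ c ^ 2 = 4 * a * d := by
  have hWdef := hW
  have hnegY : W.negY 0 β = -β := by simp [negY, hWdef]
  have hy : β ≠ W.negY 0 β := by
    rw [hnegY]
    intro h
    apply hβ0
    have : 2 * β = 0 := by linear_combination h
    exact (mul_eq_zero.mp this).resolve_left h2
  have hβ2 : (2 : k) * β ≠ 0 := mul_ne_zero h2 hβ0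
  have hslope : W.slope 0 0 β β = c / (2 * β) := by
    rw [slope_of_Y_ne rfl hy]
    simp [negY, hWdef]
    ring_nf
  have h3P : (3 : ℕ) • (Point.some _ _ hns) = (Point.some _ _ hns + Point.some _ _ hns) + Point.some _ _ hns := by
    rw [show (3:ℕ) = 2 + 1 by rfl, add_nsmul, two_nsmul, one_nsmul]
  rw [h3P, add_eq_zero_iff_eq_neg, neg_some, add_self_of_Y_ne hy]
  constructor
  · intro h
    have hx := (some.inj h).1
    rw [hslope] at hx
    simp only [addX, hWdef] at hx
    field_simp at hx
    linear_combination hx + 4 * a * hβ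
  · intro hc
    have hx : W.addX 0 0 (W.slope 0 0 β β) = 0 := by
      rw [hslope]
      simp only [addX, hWdef]
      field_simp
      linear_combination hc - 4 * a * hβ
    have hy2 : W.addY 0 0 β (W.slope 0 0 β β) = W.negY 0 β := by
      simp only [addY, negAddY, hx]
      simp only [hWdef, negY]
      ring
    exact some_eq_some_aux _ _ hx hy2
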